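/- Let n be an even positive integer and j₁, k₁ positive integers. Then ∫₀^π sin(n x) sin(j₁ x) sin(k₁ x) dx ≠ 0 if and only if j₁ + k₁ is odd. -/

import Mathlib

open Real intervalIntegral

lemma cos_int_mul_pi' (m : ℤ) : cos (m * π) = (-1 : ℝ) ^ m := by
  rcases Int.even_or_odd m with ⟨t, ht⟩ | ⟨t, ht⟩
  · subst ht
    rw [Even.neg_one_zpow ⟨t, rfl⟩]
    push_cast
    rw [show ((t:ℝ) + t) * π = t * (2*π) by ring, Real.cos_int_mul_two_pi]
  · subst ht
    rw [Odd.neg_one_zpow ⟨t, rfl⟩]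
    push_cast
    rw [show (2*(t:ℝ) + 1) * π = t * (2*π) + π by ring, Real.cos_add_pi,
      Real.cos_int_mul_two_pi]

lemma int_sin (m : ℤ) : (∫ x in (0:ℝ)..π, sin (m * x)) =
    if Even m then 0 else 2 / (m:ℝ) := by
  rcases eq_or_ne m 0 with rfl | hm
  · simp
  · rw [intervalIntegral.integral_comp_mul_left _ (by exact_mod_cast hm : (m:ℝ) ≠ 0)]
    simp only [mul_zero, integral_sin, Real.cos_zero]
    rw [cos_int_mul_pi']
    rcases Int.even_or_odd m with he | ho
    · rw [if_pos he, Even.neg_one_zpow he]; simp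
    · rw [if_neg (Int.not_even_iff_odd.2 ho), Odd.neg_one_zpow ho]
      field_simp; norm_num
      rw [← mul_assoc, mul_inv_cancel₀ (by exact_mod_cast hm), one_mul]

lemma sin_triple (a b c : ℤ) (x : ℝ) :
    sin (a * x) * sin (b * x) * sin (c * x) =
      (sin (((a + c - b : ℤ) : ℝ) * x) + sin (((b + c - a : ℤ) : ℝ) * x)
        + sin (((a + b - c : ℤ) : ℝ) * x) - sin (((a + b + c : ℤ) : ℝ) * x)) / 4 := by
  push_cast
  rw [show ((a:ℝ) + c - b) * x = (a*x + c*x) - b*x by ring,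
    show ((b:ℝ) + c - a) * x = (b*x + c*x) - a*x by ring,
    show ((a:ℝ) + b - c) * x = (a*x + b*x) - c*x by ring,
    show ((a:ℝ) + b + c) * x = (a*x + b*x) + c*x by ring]
  simp only [sin_add, sin_sub, cos_add, cos_sub]
  ring_nf

lemma key (a b c : ℤ) :
    (∫ x in (0:ℝ)..π, sin (a * x) * sin (b * x) * sin (c * x)) =
      ((if Even (a + c - b) then 0 else 2 / ((a + c - b : ℤ) : ℝ))
        + (if Even (b + c - a) then 0 else 2 / ((b + c - a : ℤ) : ℝ))
        + (if Even (a + b - c) then 0 else 2 / ((a + b - c : ℤ) : ℝ))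
        - (if Even (a + b + c) then 0 else 2 / ((a + b + c : ℤ) : ℝ))) / 4 := by
  have hI : ∀ m : ℤ, IntervalIntegrable (fun x => sin ((m:ℝ) * x)) MeasureTheory.volume 0 π :=
    fun m => (Real.continuous_sin.comp (continuous_const.mul continuous_id)).intervalIntegrable _ _
  rw [intervalIntegral.integral_congr (fun x _ => sin_triple a b c x)]
  rw [intervalIntegral.integral_div]
  rw [intervalIntegral.integral_sub (((hI _).add (hI _)).add (hI _)) (hI _),
    intervalIntegral.integral_add ((hI _).add (hI _)) (hI _),
    intervalIntegral.integral_add (hI _) (hI _)]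
  rw [int_sin, int_sin, int_sin, int_sin]

theorem stmt_19 (n j k : ℕ) (hn : 0 < n) (heven : Even n) (hj : 0 < j) (hk : 0 < k) :
    (∫ x in (0:ℝ)..π, sin (n * x) * sin (j * x) * sin (k * x)) ≠ 0 ↔ Odd (j + k) := by
  have hkey := key (n : ℤ) (j : ℤ) (k : ℤ)
  push_cast at hkey
  rw [hkey]
  rw [Nat.even_iff] at heven
  rcases Nat.even_or_odd (j + k) with hjk | hjk
  · have h1 : Even ((n : ℤ) + k - j) := by
      rw [Int.even_iff]; rw [Nat.even_iff] at hjk; omega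
    have h2 : Even ((j : ℤ) + k - n) := by
      rw [Int.even_iff]; rw [Nat.even_iff] at hjk; omega
    have h3 : Even ((n : ℤ) + j - k) := by
      rw [Int.even_iff]; rw [Nat.even_iff] at hjk; omega
    have h4 : Even ((n : ℤ) + j + k) := by
      rw [Int.even_iff]; rw [Nat.even_iff] at hjk; omega
    rw [if_pos h1, if_pos h2, if_pos h3, if_pos h4]
    simp [Nat.even_iff] at hjk ⊢
    omega
  · have h1 : ¬ Even ((n : ℤ) + k - j) := by
      rw [Int.even_iff]; rw [Nat.odd_iff] at hjk; omega
    have h2 : ¬ Even ((j : ℤ) + k - n) := by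
      rw [Int.even_iff]; rw [Nat.odd_iff] at hjk; omega
    have h3 : ¬ Even ((n : ℤ) + j - k) := by
      rw [Int.even_iff]; rw [Nat.odd_iff] at hjk; omega
    have h4 : ¬ Even ((n : ℤ) + j + k) := by
      rw [Int.even_iff]; rw [Nat.odd_iff] at hjk; omega
    rw [if_neg h1, if_neg h2, if_neg h3, if_neg h4]
    have hA : ((n : ℝ) + k - j) ≠ 0 := by
      intro h
      have : ((n : ℤ) + k - j : ℤ) = 0 := by exact_mod_cast (by push_cast; linarith : (((n:ℤ)+k-j : ℤ) : ℝ) = 0)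
      rw [Int.even_iff] at h1; omega
    have hB : ((j : ℝ) + k - n) ≠ 0 := by
      intro h
      have : ((j : ℤ) + k - n : ℤ) = 0 := by exact_mod_cast (by push_cast; linarith : (((j:ℤ)+k-n : ℤ) : ℝ) = 0)
      rw [Int.even_iff] at h2; omega
    have hC : ((n : ℝ) + j - k) ≠ 0 := by
      intro h
      have : ((n : ℤ) + j - k : ℤ) = 0 := by exact_mod_cast (by push_cast; linarith : (((n:ℤ)+j-k : ℤ) : ℝ) = 0)
      rw [Int.even_iff] at h3; omega
    have hD : ((n : ℝ) + j + k) ≠ 0 := by positivity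
    have hval : (2 / ((n:ℝ) + k - j) + 2 / ((j:ℝ) + k - n) + 2 / ((n:ℝ) + j - k)
        - 2 / ((n:ℝ) + j + k)) / 4
        = 4 * n * j * k / (((n:ℝ) + k - j) * ((j:ℝ) + k - n) * ((n:ℝ) + j - k)
          * ((n:ℝ) + j + k)) := by
      field_simp
      ring
    rw [hval]
    constructor
    · intro _; exact hjk
    · intro _
      apply div_ne_zero
      · have : (0:ℝ) < 4 * n * j * k := by positivity
        linarith
      · exact mul_ne_zero (mul_ne_zero (mul_ne_zero hA hB) hC) hD
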